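/- Let b_i ≥ 0, g_i > 0, α_i > 0, d_i > 0 be real parameters and h_i ∈ ℕ with h_i ≥ 1, for i ∈ Fin 3. Then there exists exactly one x : Fin 3 → ℝ with x(i) ≥ 0 for all i satisfying the equilibrium equations b_i + g_i/(1 + α_i·(x(i+1))^{h_i}) − d_i·x(i) = 0 for all i ∈ Fin 3 (indices modulo 3). That is, the standard repressilator has a unique equilibrium in the nonnegative octant. -/

import Mathlib

open Set

/-- A strictly decreasing continuous self-map of `[0,∞)` (with positive values)
has a unique fixed point. -/
private lemma uniqueFixedOfStrictAnti (F : ℝ → ℝ)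
    (hcont : ContinuousOn F (Set.Ici 0))
    (hanti : ∀ y₁, 0 ≤ y₁ → ∀ y₂, 0 ≤ y₂ → y₁ < y₂ → F y₂ < F y₁)
    (hmap : ∀ y, 0 ≤ y → 0 < F y) :
    ∃! x : ℝ, 0 ≤ x ∧ F x = x := by
  set M := F 0 with hM
  have hM0 : 0 < M := hmap 0 le_rfl
  have hFM : F M ≤ M := le_of_lt (hanti 0 le_rfl M hM0.le hM0)
  have hsub : Set.Icc (0:ℝ) M ⊆ Set.Ici 0 := fun y hy => hy.1
  have hGcont : ContinuousOn (fun y => F y - y) (Set.Icc 0 M) :=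
    (hcont.mono hsub).sub continuousOn_id
  have h0 : (0:ℝ) ∈ Set.Icc (F M - M) (F 0 - 0) := by
    constructor
    · linarith
    · simp only [sub_zero]; linarith
  obtain ⟨x, hxmem, hx⟩ := intermediate_value_Icc' hM0.le hGcont h0
  have hfix : F x = x := by
    have hx' : F x - x = 0 := hx
    linarith
  refine ⟨x, ⟨hxmem.1, hfix⟩, ?_⟩
  rintro z ⟨hz, hzfix⟩
  rcases lt_trichotomy z x with hlt | heq | hgt
  · have := hanti z hz x hxmem.1 hlt
    rw [hzfix, hfix] at this; linarith
  · exact heq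
  · have := hanti x hxmem.1 z hz hgt
    rw [hzfix, hfix] at this; linarith

/-- The standard repressilator has a unique equilibrium in the nonnegative octant. -/
theorem repressilator_unique_equilibrium
    (b g α d : Fin 3 → ℝ) (h : Fin 3 → ℕ)
    (hb : ∀ i, 0 ≤ b i) (hg : ∀ i, 0 < g i) (hα : ∀ i, 0 < α i)
    (hd : ∀ i, 0 < d i) (hh : ∀ i, 1 ≤ h i) :
    ∃! x : Fin 3 → ℝ, (∀ i, 0 ≤ x i) ∧
      ∀ i : Fin 3, b i + g i / (1 + α i * (x (i + 1)) ^ (h i)) - d i * x i = 0 := by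
  -- the response functions
  set φ : Fin 3 → ℝ → ℝ := fun i y => (b i + g i / (1 + α i * y ^ h i)) / d i with hφdef
  have hden : ∀ i (y : ℝ), 0 ≤ y → (0:ℝ) < 1 + α i * y ^ h i := by
    intro i y hy
    have h1 := hα i
    positivity
  have hpos : ∀ i (y : ℝ), 0 ≤ y → 0 < φ i y := by
    intro i y hy
    exact div_pos (add_pos_of_nonneg_of_pos (hb i) (div_pos (hg i) (hden i y hy))) (hd i)
  have hanti : ∀ i, ∀ y₁, 0 ≤ y₁ → ∀ y₂, 0 ≤ y₂ → y₁ < y₂ → φ i y₂ < φ i y₁ := by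
    intro i y₁ h1 y₂ h2 hlt
    have hp : y₁ ^ h i < y₂ ^ h i :=
      pow_lt_pow_left₀ hlt h1 (Nat.one_le_iff_ne_zero.mp (hh i))
    have h3 : 1 + α i * y₁ ^ h i < 1 + α i * y₂ ^ h i := by
      have := hα i; nlinarith
    exact div_lt_div_of_pos_right
      (add_lt_add_right (div_lt_div_of_pos_left (hg i) (hden i y₁ h1) h3) (b i)) (hd i)
  have hcont : ∀ i, ContinuousOn (φ i) (Set.Ici 0) := by
    intro i
    apply ContinuousOn.div _ continuousOn_const (fun y _ => (hd i).ne')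
    exact continuousOn_const.add
      (continuousOn_const.div (by fun_prop) (fun y hy => (hden i y hy).ne'))
  -- the composed map
  set F : ℝ → ℝ := fun y => φ 0 (φ 1 (φ 2 y)) with hFdef
  have hFmap : ∀ y, 0 ≤ y → 0 < F y := fun y hy =>
    hpos 0 _ (hpos 1 _ (hpos 2 y hy).le).le
  have hFanti : ∀ y₁, 0 ≤ y₁ → ∀ y₂, 0 ≤ y₂ → y₁ < y₂ → F y₂ < F y₁ := by
    intro y₁ h1 y₂ h2 hlt
    have a2 := hanti 2 y₁ h1 y₂ h2 hlt
    have a1 := hanti 1 _ (hpos 2 y₂ h2).le _ (hpos 2 y₁ h1).le a2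
    exact hanti 0 _ (hpos 1 _ (hpos 2 y₁ h1).le).le _ (hpos 1 _ (hpos 2 y₂ h2).le).le a1
  have hFcont : ContinuousOn F (Set.Ici 0) := by
    apply ((hcont 0).comp ((hcont 1).comp (hcont 2) ?_) ?_)
    · intro y hy; exact (hpos 2 y hy).le
    · intro y hy; exact (hpos 1 _ (hpos 2 y hy).le).le
  obtain ⟨x₀, ⟨hx₀nn, hx₀fix⟩, hx₀uniq⟩ := uniqueFixedOfStrictAnti F hFcont hFanti hFmap
  simp only [hFdef] at hx₀fix
  -- characterization of the equilibrium equations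
  have heq : ∀ i (z y : ℝ), 0 ≤ y →
      (b i + g i / (1 + α i * y ^ h i) - d i * z = 0 ↔ z = φ i y) := by
    intro i z y hy
    rw [sub_eq_zero, hφdef]
    simp only
    rw [eq_div_iff (hd i).ne', mul_comm z (d i), eq_comm]
  -- the equilibrium
  set x2 : ℝ := φ 2 x₀ with hx2
  set x1 : ℝ := φ 1 x2 with hx1
  have hx2nn : 0 ≤ x2 := (hpos 2 x₀ hx₀nn).le
  have hx1nn : 0 ≤ x1 := (hpos 1 x2 hx2nn).le
  refine ⟨![x₀, x1, x2], ⟨?_, ?_⟩, ?_⟩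
  · intro i; fin_cases i
    · exact hx₀nn
    · exact hx1nn
    · exact hx2nn
  · intro i; fin_cases i
    · show b 0 + g 0 / (1 + α 0 * x1 ^ h 0) - d 0 * x₀ = 0
      refine (heq 0 x₀ x1 hx1nn).mpr ?_
      rw [hx1, hx2]
      exact hx₀fix.symm
    · show b 1 + g 1 / (1 + α 1 * x2 ^ h 1) - d 1 * x1 = 0
      exact (heq 1 x1 x2 hx2nn).mpr hx1
    · show b 2 + g 2 / (1 + α 2 * x₀ ^ h 2) - d 2 * x2 = 0
      exact (heq 2 x2 x₀ hx₀nn).mpr hx2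
  · rintro y ⟨hynn, hyeq⟩
    have e0 : y 0 = φ 0 (y 1) := (heq 0 (y 0) (y 1) (hynn 1)).mp (hyeq 0)
    have e1 : y 1 = φ 1 (y 2) := (heq 1 (y 1) (y 2) (hynn 2)).mp (hyeq 1)
    have e2 : y 2 = φ 2 (y 0) := (heq 2 (y 2) (y 0) (hynn 0)).mp (hyeq 2)
    have hyfix : F (y 0) = y 0 := by
      simp only [hFdef]
      rw [← e2, ← e1, ← e0]
    have hy0 : y 0 = x₀ := hx₀uniq (y 0) ⟨hynn 0, hyfix⟩
    have hy2 : y 2 = x2 := by rw [e2, hy0, hx2]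
    have hy1 : y 1 = x1 := by rw [e1, hy2, hx1]
    funext i; fin_cases i
    · exact hy0
    · exact hy1
    · exact hy2
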